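/- arXiv:1905.07728 — 2 statements merged into one kernel-verified Lean document; each statement's English description precedes it below -/
import Mathlib

section
/- For real h ≠ 0, l > 0 and a ∈ ℝ, the symmetric limit lim_{K→∞} ∑_{|k|≤K} (1/(2π)) ln|x − a − kl + ih| − (1/(2π)) ln|x − a′ − kl + ih′| (difference of two such shifted logarithmic sums with parameters (a,h) and (a′,h′)) equals (1/(2π)) ln|sin(π(x−a+ih)/l)| − (1/(2π)) ln|sin(π(x−a′+ih′)/l)| for any complex x not equal to any of the points a + kl − ih or a′ + kl − ih′. -/
open Complex Filter

private lemma prod_Icc_eq_aux (z : ℂ) (K : ℕ) :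
    ∏ k ∈ Finset.Icc (-(K : ℤ)) (K : ℤ), (z - (k : ℂ)) =
      z * ∏ j ∈ Finset.range K, (z ^ 2 - ((j : ℂ) + 1) ^ 2) := by
  induction K with
  | zero => simp
  | succ n ih =>
    have h1 : Finset.Icc (-((n : ℤ) + 1)) ((n : ℤ) + 1) =
        insert (-((n : ℤ) + 1)) (insert ((n : ℤ) + 1) (Finset.Icc (-(n : ℤ)) (n : ℤ))) := by
      ext k; simp only [Finset.mem_Icc, Finset.mem_insert]; omega
    have h2 : (-((n : ℤ) + 1)) ∉ insert ((n : ℤ) + 1) (Finset.Icc (-(n : ℤ)) (n : ℤ)) := by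
      simp only [Finset.mem_insert, Finset.mem_Icc]; omega
    have h3 : ((n : ℤ) + 1) ∉ Finset.Icc (-(n : ℤ)) (n : ℤ) := by
      simp only [Finset.mem_Icc]; omega
    push_cast
    rw [h1, Finset.prod_insert h2, Finset.prod_insert h3, ih, Finset.prod_range_succ]
    push_cast
    ring

/-- The symmetric limit of the difference of two shifted logarithmic sums equals the
difference of the corresponding logarithms of sines. -/
theorem symmetric_log_sum_tendsto_log_sin
    (l : ℝ) (hl : 0 < l) (a h a' h' : ℝ) (hh : h ≠ 0) (x : ℂ)
    (hx : ∀ k : ℤ, x ≠ (a : ℂ) + k * l - Complex.I * h)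
    (hx' : ∀ k : ℤ, x ≠ (a' : ℂ) + k * l - Complex.I * h') :
    Tendsto (fun K : ℕ => ∑ k ∈ Finset.Icc (-(K : ℤ)) (K : ℤ),
        ((1 / (2 * Real.pi)) * Real.log (‖x - a - k * l + Complex.I * h‖) -
         (1 / (2 * Real.pi)) * Real.log (‖x - a' - k * l + Complex.I * h'‖)))
      atTop
      (nhds ((1 / (2 * Real.pi)) *
          Real.log (‖Complex.sin ((Real.pi : ℂ) * (x - a + Complex.I * h) / l)‖) -
        (1 / (2 * Real.pi)) *
          Real.log (‖Complex.sin ((Real.pi : ℂ) * (x - a' + Complex.I * h') / l)‖))) := by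
  have hl0 : (l : ℂ) ≠ 0 := by exact_mod_cast hl.ne'
  set z : ℂ := (x - a + Complex.I * h) / l with hzdef
  set w : ℂ := (x - a' + Complex.I * h') / l with hwdef
  have hzk : ∀ k : ℤ, z - (k : ℂ) ≠ 0 := by
    intro k hk
    apply hx k
    have h1 : z = (k : ℂ) := sub_eq_zero.mp hk
    rw [hzdef, div_eq_iff hl0] at h1
    linear_combination h1
  have hwk : ∀ k : ℤ, w - (k : ℂ) ≠ 0 := by
    intro k hk
    apply hx' k
    have h1 : w = (k : ℂ) := sub_eq_zero.mp hk
    rw [hwdef, div_eq_iff hl0] at h1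
    linear_combination h1
  have hpi0 : (Real.pi : ℂ) ≠ 0 := by exact_mod_cast Real.pi_ne_zero
  have hsinz : Complex.sin ((Real.pi : ℂ) * z) ≠ 0 := by
    rw [Complex.sin_ne_zero_iff]
    intro k hk
    exact hzk k (sub_eq_zero.mpr (mul_left_cancel₀ hpi0 (by rw [hk]; ring)))
  have hsinw : Complex.sin ((Real.pi : ℂ) * w) ≠ 0 := by
    rw [Complex.sin_ne_zero_iff]
    intro k hk
    exact hwk k (sub_eq_zero.mpr (mul_left_cancel₀ hpi0 (by rw [hk]; ring)))
  -- the ratio of partial products tends to the ratio of sines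
  set P : ℕ → ℂ := fun K => ∏ k ∈ Finset.Icc (-(K : ℤ)) (K : ℤ), (z - (k : ℂ)) with hP
  set Q : ℕ → ℂ := fun K => ∏ k ∈ Finset.Icc (-(K : ℤ)) (K : ℤ), (w - (k : ℂ)) with hQ
  have hPne : ∀ K, P K ≠ 0 := fun K => Finset.prod_ne_zero_iff.mpr (fun k _ => hzk k)
  have hQne : ∀ K, Q K ≠ 0 := fun K => Finset.prod_ne_zero_iff.mpr (fun k _ => hwk k)
  have key : Tendsto (fun K : ℕ => P K / Q K) atTop
      (nhds (Complex.sin ((Real.pi : ℂ) * z) / Complex.sin ((Real.pi : ℂ) * w))) := by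
    have hE := (Complex.tendsto_euler_sin_prod z).div (Complex.tendsto_euler_sin_prod w) hsinw
    apply hE.congr
    intro K
    have hcast : ∀ j : ℕ, ((j : ℂ) + 1) ≠ 0 := by
      intro j
      exact Nat.cast_add_one_ne_zero j
    have hfac : ∀ u : ℂ, (Real.pi : ℂ) * u * ∏ j ∈ Finset.range K, ((1 : ℂ) - u ^ 2 / ((j : ℂ) + 1) ^ 2)
        = ((Real.pi : ℂ) * (-1) ^ K / ∏ j ∈ Finset.range K, ((j : ℂ) + 1) ^ 2) *
          (u * ∏ j ∈ Finset.range K, (u ^ 2 - ((j : ℂ) + 1) ^ 2)) := by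
      intro u
      have : ∀ j ∈ Finset.range K, ((1 : ℂ) - u ^ 2 / ((j : ℂ) + 1) ^ 2)
          = (-1) * ((u ^ 2 - ((j : ℂ) + 1) ^ 2) / ((j : ℂ) + 1) ^ 2) := by
        intro j hj
        field_simp [hcast j]
        ring
      rw [Finset.prod_congr rfl this, Finset.prod_mul_distrib, Finset.prod_const, Finset.card_range,
        Finset.prod_div_distrib]
      field_simp
    have hCne : ((Real.pi : ℂ) * (-1) ^ K / ∏ j ∈ Finset.range K, ((j : ℂ) + 1) ^ 2) ≠ 0 := by
      apply div_ne_zero (mul_ne_zero hpi0 (by simp))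
      exact Finset.prod_ne_zero_iff.mpr (fun j _ => pow_ne_zero 2 (hcast j))
    simp only [Pi.div_apply]
    rw [hfac z, hfac w, mul_div_mul_left _ _ hCne, hP, hQ]
    simp only [prod_Icc_eq_aux]
  -- apply (1/(2π)) * log ∘ abs
  have hratio_ne : Complex.sin ((Real.pi : ℂ) * z) / Complex.sin ((Real.pi : ℂ) * w) ≠ 0 :=
    div_ne_zero hsinz hsinw
  have habs_ne : ‖Complex.sin ((Real.pi : ℂ) * z) / Complex.sin ((Real.pi : ℂ) * w)‖ ≠ 0 := by
    simpa using hratio_ne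
  have key2 : Tendsto (fun K : ℕ => (1 / (2 * Real.pi)) * Real.log (‖P K / Q K‖)) atTop
      (nhds ((1 / (2 * Real.pi)) *
        Real.log (‖Complex.sin ((Real.pi : ℂ) * z) / Complex.sin ((Real.pi : ℂ) * w)‖))) := by
    exact ((Real.continuousAt_log habs_ne).tendsto.comp
      ((continuous_norm.tendsto _).comp key)).const_mul _
  have hsum_eq : ∀ K : ℕ, (∑ k ∈ Finset.Icc (-(K : ℤ)) (K : ℤ),
        ((1 / (2 * Real.pi)) * Real.log (‖x - a - k * l + Complex.I * h‖) -
         (1 / (2 * Real.pi)) * Real.log (‖x - a' - k * l + Complex.I * h'‖)))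
      = (1 / (2 * Real.pi)) * Real.log (‖P K / Q K‖) := by
    intro K
    have hterm : ∀ k ∈ Finset.Icc (-(K : ℤ)) (K : ℤ),
        ((1 / (2 * Real.pi)) * Real.log (‖x - a - k * l + Complex.I * h‖) -
         (1 / (2 * Real.pi)) * Real.log (‖x - a' - k * l + Complex.I * h'‖))
        = (1 / (2 * Real.pi)) * (Real.log (‖z - (k : ℂ)‖) -
            Real.log (‖w - (k : ℂ)‖)) := by
      intro k _
      have e1 : x - a - k * l + Complex.I * h = (l : ℂ) * (z - (k : ℂ)) := by
        rw [hzdef]; field_simp; ring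
      have e2 : x - a' - k * l + Complex.I * h' = (l : ℂ) * (w - (k : ℂ)) := by
        rw [hwdef]; field_simp; ring
      rw [e1, e2, norm_mul, norm_mul, Complex.norm_real, Real.norm_eq_abs, abs_of_pos hl,
        Real.log_mul hl.ne' (norm_ne_zero_iff.mpr (hzk k)),
        Real.log_mul hl.ne' (norm_ne_zero_iff.mpr (hwk k))]
      ring
    rw [Finset.sum_congr rfl hterm, ← Finset.mul_sum, Finset.sum_sub_distrib,
      ← Real.log_prod (fun k _ => norm_ne_zero_iff.mpr (hzk k)),
      ← Real.log_prod (fun k _ => norm_ne_zero_iff.mpr (hwk k)),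
      ← Complex.norm_prod, ← Complex.norm_prod,
      ← Real.log_div (norm_ne_zero_iff.mpr (hPne K)) (norm_ne_zero_iff.mpr (hQne K)),
      ← norm_div]
  have hfinal : (Real.pi : ℂ) * (x - a + Complex.I * h) / l = (Real.pi : ℂ) * z := by
    rw [hzdef]; ring
  have hfinal' : (Real.pi : ℂ) * (x - a' + Complex.I * h') / l = (Real.pi : ℂ) * w := by
    rw [hwdef]; ring
  rw [hfinal, hfinal',
    show ((1 / (2 * Real.pi)) * Real.log (‖Complex.sin ((Real.pi : ℂ) * z)‖) -
        (1 / (2 * Real.pi)) * Real.log (‖Complex.sin ((Real.pi : ℂ) * w)‖))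
      = (1 / (2 * Real.pi)) *
        Real.log (‖Complex.sin ((Real.pi : ℂ) * z) / Complex.sin ((Real.pi : ℂ) * w)‖) by
      rw [norm_div, Real.log_div (norm_ne_zero_iff.mpr hsinz) (norm_ne_zero_iff.mpr hsinw)]; ring]
  exact Tendsto.congr (fun K => (hsum_eq K).symm) key2
end

section
/- For any w on the unit circle and any function h of the form h(ξ) = ∑_{n≥1} aₙ ξ^{−n} with real coefficients aₙ (absolutely convergent with derivative on an annulus around 𝕋), ∮_𝕋 [conj(h(w)) − conj(h(ξ))]/(w − ξ) dξ − ∮_𝕋 [(h(w) − h(ξ))(conj(w) − conj(ξ))]/(w − ξ)² dξ = 2i ∮_𝕋 Im[conj(h(w) − h(ξ))·(w − ξ)]/(w − ξ)² dξ, and this quantity equals 0. -/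
open Complex ComplexConjugate MeasureTheory Metric Filter

lemma circleIntegral_congr_off_pt {f g : ℂ → ℂ} {w : ℂ}
    (hfg : ∀ ξ : ℂ, ‖ξ‖ = 1 → ξ ≠ w → f ξ = g ξ) :
    (∮ ξ in C(0, 1), f ξ) = ∮ ξ in C(0, 1), g ξ := by
  have hS : {θ : ℝ | circleMap 0 1 θ = w}.Countable := by
    have hsub : {θ : ℝ | circleMap 0 1 θ = w} ⊆
        ((fun θ : ℝ => (θ : ℂ) * Complex.I) ⁻¹' (Complex.exp ⁻¹' {w})) := by
      intro θ hθ
      simpa [circleMap] using hθ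
    refine (((Set.countable_singleton w).preimage_cexp).preimage ?_).mono hsub
    intro x y hxy
    have := mul_right_cancel₀ Complex.I_ne_zero hxy
    exact_mod_cast this
  have hvol : (volume : Measure ℝ) {θ : ℝ | circleMap 0 1 θ = w} = 0 :=
    hS.measure_zero _
  refine intervalIntegral.integral_congr_ae ?_
  filter_upwards [MeasureTheory.measure_eq_zero_iff_ae_notMem.mp hvol] with θ hθ _
  have h1 : ‖circleMap 0 1 θ‖ = 1 := by
    simpa using norm_circleMap_zero 1 θ
  rw [hfg _ h1 hθ]

/-- For `h(ξ) = ∑_{n≥1} aₙ ξ^{−n}` with real coefficients, holomorphic on an annulus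
around the unit circle, and `w` on the unit circle, the stated combination of contour
integrals equals `2i ∮ Im[conj(h(w)−h(ξ))(w−ξ)]/(w−ξ)² dξ` and vanishes. -/
theorem circleIntegral_symmetric_kernel
    (h : ℂ → ℂ) (a : ℕ → ℝ) (r : ℝ) (hr0 : 0 < r) (hr : r < 1)
    (hrep : ∀ ξ : ℂ, r < ‖ξ‖ →
      HasSum (fun n : ℕ => (a n : ℂ) * ξ ^ (-(n : ℤ) - 1)) (h ξ))
    (hdiff : DifferentiableOn ℂ h {ξ : ℂ | r < ‖ξ‖})
    (w : ℂ) (hw : ‖w‖ = 1) :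
    ((∮ ξ in C(0, 1), (conj (h w) - conj (h ξ)) / (w - ξ)) -
        ∮ ξ in C(0, 1), (h w - h ξ) * (conj w - conj ξ) / (w - ξ) ^ 2) =
      ((2 * Complex.I) *
        ∮ ξ in C(0, 1), (((conj (h w - h ξ) * (w - ξ)).im : ℝ) : ℂ) / (w - ξ) ^ 2) ∧
    ((∮ ξ in C(0, 1), (conj (h w) - conj (h ξ)) / (w - ξ)) -
        ∮ ξ in C(0, 1), (h w - h ξ) * (conj w - conj ξ) / (w - ξ) ^ 2) = 0 := by
  -- basic constants
  set ρ : ℝ := (r + 1) / 2 with hρdef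
  have hρr : r < ρ := by simp only [hρdef]; linarith
  have hρ0 : 0 < ρ := hr0.trans hρr
  have hρ1 : ρ < 1 := by simp only [hρdef]; linarith
  set σ : ℝ := (ρ + 1) / 2 with hσdef
  have hσρ : ρ < σ := by simp only [hσdef]; linarith
  have hσ0 : 0 < σ := hρ0.trans hσρ
  have hσ1 : σ < 1 := by simp only [hσdef]; linarith
  have h1σ : 1 < σ⁻¹ := (one_lt_inv₀ hσ0).mpr hσ1
  clear_value ρ σ
  clear hρdef hσdef
  have hw0 : w ≠ 0 := by
    intro h0; rw [h0] at hw; simp at hw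
  -- rewrite the zpow in the representation
  have hzpow : ∀ (x : ℂ) (n : ℕ), x ^ (-(n : ℤ) - 1) = (x ^ (n + 1))⁻¹ := by
    intro x n
    rw [show -(n : ℤ) - 1 = -((n + 1 : ℕ) : ℤ) by push_cast; ring, zpow_neg, zpow_natCast]
  have hrep' : ∀ ξ : ℂ, r < ‖ξ‖ →
      HasSum (fun n : ℕ => (a n : ℂ) * (ξ ^ (n + 1))⁻¹) (h ξ) := by
    intro ξ hξ
    have := hrep ξ hξ
    simpa [hzpow] using this
  -- summability facts
  have hρabs : ‖(ρ : ℂ)‖ = ρ := by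
    rw [Complex.norm_real, Real.norm_eq_abs, abs_of_pos hρ0]
  have hu : Summable (fun n : ℕ => |a n| / ρ ^ (n + 1)) := by
    have h1 := summable_norm_iff.mpr (hrep' (ρ : ℂ) (by rwa [hρabs])).summable
    have h2 : ∀ n : ℕ, ‖(a n : ℂ) * (((ρ : ℂ)) ^ (n + 1))⁻¹‖ = |a n| / ρ ^ (n + 1) := by
      intro n
      rw [norm_mul, norm_inv, norm_pow, Complex.norm_real, Complex.norm_real,
        Real.norm_eq_abs, Real.norm_eq_abs, abs_of_pos hρ0, div_eq_mul_inv]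
    simpa [abs_of_pos hρ0, div_eq_mul_inv] using h1
  have hA : Summable (fun n : ℕ => |a n|) := by
    refine Summable.of_nonneg_of_le (fun n => abs_nonneg _) (fun n => ?_) hu
    rw [le_div_iff₀ (pow_pos hρ0 _)]
    exact mul_le_of_le_one_right (abs_nonneg _) (pow_le_one₀ hρ0.le hρ1.le)
  set M : ℝ := ∑' n, |a n| with hMdef
  have hM0 : 0 ≤ M := tsum_nonneg (fun n => abs_nonneg _)
  have hhM : ∀ ξ : ℂ, 1 ≤ ‖ξ‖ → ‖h ξ‖ ≤ M := by
    intro ξ hξ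
    have hs := hrep' ξ (hr.trans_le hξ)
    have hterm : ∀ n : ℕ, ‖(a n : ℂ) * (ξ ^ (n + 1))⁻¹‖ ≤ |a n| := by
      intro n
      rw [norm_mul, norm_inv, norm_pow, Complex.norm_real, Real.norm_eq_abs]
      refine mul_le_of_le_one_right (abs_nonneg _) ?_
      rw [inv_le_one_iff₀]
      right
      exact one_le_pow₀ hξ
    have hsn : Summable (fun n : ℕ => ‖(a n : ℂ) * (ξ ^ (n + 1))⁻¹‖) :=
      Summable.of_nonneg_of_le (fun n => norm_nonneg _) hterm hA
    calc ‖h ξ‖ = ‖∑' n, (a n : ℂ) * (ξ ^ (n + 1))⁻¹‖ := by rw [hs.tsum_eq]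
      _ ≤ ∑' n, ‖(a n : ℂ) * (ξ ^ (n + 1))⁻¹‖ := norm_tsum_le_tsum_norm hsn
      _ ≤ M := Summable.tsum_le_tsum hterm hsn hA
  -- bound on coefficients
  obtain ⟨C, hC⟩ : ∃ C : ℝ, ∀ n : ℕ, |a n| / ρ ^ (n + 1) ≤ C := by
    obtain ⟨C, hC⟩ := hu.tendsto_atTop_zero.bddAbove_range
    exact ⟨C, fun n => hC (Set.mem_range_self n)⟩
  have haC : ∀ n : ℕ, |a n| ≤ C * ρ ^ (n + 1) := by
    intro n
    have := hC n
    rwa [div_le_iff₀ (pow_pos hρ0 _)] at this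
  -- the reflected function g
  set g : ℂ → ℂ := fun ξ => ∑' n : ℕ, (a n : ℂ) * ξ ^ (n + 1) with hgdef
  -- differentiability of g on ball 0 σ⁻¹
  have hg_der : ∀ z ∈ ball (0 : ℂ) σ⁻¹,
      HasDerivAt g (∑' n : ℕ, (a n : ℂ) * (((n : ℂ) + 1) * z ^ n)) z := by
    intro z hz
    refine hasDerivAt_tsum_of_isPreconnected
      (u := fun n : ℕ => (C * ρ) * (((n : ℝ) + 1) * (ρ / σ) ^ n))
      (g := fun (n : ℕ) (ξ : ℂ) => (a n : ℂ) * ξ ^ (n + 1))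
      (g' := fun (n : ℕ) (ξ : ℂ) => (a n : ℂ) * (((n : ℂ) + 1) * ξ ^ n)) ?_ isOpen_ball
      (convex_ball _ _).isPreconnected ?_ ?_
      (show (0:ℂ) ∈ ball (0:ℂ) σ⁻¹ from mem_ball_self (by positivity)) ?_ hz
    · have ht0 : (0 : ℝ) ≤ ρ / σ := by positivity
      have ht1 : ρ / σ < 1 := (div_lt_one hσ0).mpr hσρ
      have hs1 : Summable (fun n : ℕ => ((n : ℝ) + 1) * (ρ / σ) ^ n) := by
        have h1 : Summable (fun n : ℕ => (n : ℝ) ^ 1 * (ρ / σ) ^ n) :=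
          summable_pow_mul_geometric_of_norm_lt_one 1 (by rwa [Real.norm_eq_abs, _root_.abs_of_nonneg ht0])
        have h2 : Summable (fun n : ℕ => (ρ / σ) ^ n) := summable_geometric_of_lt_one ht0 ht1
        simpa [add_mul, one_mul, pow_one] using h1.add h2
      exact hs1.mul_left _
    · intro n y _
      simpa using ((hasDerivAt_pow (n + 1) y).const_mul ((a n : ℂ)))
    · intro n y hy
      have hy' : ‖y‖ ≤ σ⁻¹ := le_of_lt (by simpa [mem_ball_zero_iff] using hy)
      have hn : ‖((n : ℂ) + 1)‖ = (n : ℝ) + 1 := by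
        rw [show ((n : ℂ) + 1) = ((n + 1 : ℕ) : ℂ) by push_cast; ring,
          Complex.norm_natCast]
        push_cast; ring
      have heq : ‖(a n : ℂ) * (((n : ℂ) + 1) * y ^ n)‖ =
          |a n| * (((n : ℝ) + 1) * ‖y‖ ^ n) := by
        rw [norm_mul, norm_mul, norm_pow, Complex.norm_real, Real.norm_eq_abs, hn]
      rw [heq]
      have hC0 : 0 ≤ C * ρ ^ (n+1) := le_trans (abs_nonneg _) (haC n)
      have hb : |a n| * (((n : ℝ) + 1) * ‖y‖ ^ n) ≤
          (C * ρ ^ (n + 1)) * (((n : ℝ) + 1) * (σ⁻¹) ^ n) := by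
        refine mul_le_mul (haC n) ?_ (by positivity) hC0
        exact mul_le_mul_of_nonneg_left (pow_le_pow_left₀ (norm_nonneg _) hy' n)
          (by positivity)
      refine hb.trans (le_of_eq ?_)
      beta_reduce
      rw [div_pow, pow_succ, inv_pow, div_eq_mul_inv]
      ring
    · have hz0 : (fun n : ℕ => (a n : ℂ) * (0 : ℂ) ^ (n + 1)) = fun _ => 0 := by
        funext n; simp
      rw [hz0]; exact summable_zero
  have hgd : DifferentiableOn ℂ g (ball (0 : ℂ) σ⁻¹) := fun z hz =>
    ((hg_der z hz).differentiableAt).differentiableWithinAt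
  have hwball : w ∈ ball (0 : ℂ) σ⁻¹ := by
    rw [mem_ball_zero_iff, hw]; exact h1σ
  -- conj inversion on the circle
  have hconjinv : ∀ ξ : ℂ, ‖ξ‖ = 1 → (starRingEnd ℂ) ξ = ξ⁻¹ := by
    intro ξ hξ
    rw [Complex.inv_def, Complex.normSq_eq_norm_sq, hξ]
    simp
  -- conj ∘ h = g on the circle
  have hconj_eq : ∀ ξ : ℂ, ‖ξ‖ = 1 → conj (h ξ) = g ξ := by
    intro ξ hξ
    have hs := hrep' ξ (by rw [hξ]; exact hr)
    have hs2 := hs.map (starRingEnd ℂ) Complex.continuous_conj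
    have heq : ((starRingEnd ℂ) ∘ fun n : ℕ => (a n : ℂ) * (ξ ^ (n + 1))⁻¹) =
        fun n : ℕ => (a n : ℂ) * ξ ^ (n + 1) := by
      funext n
      simp only [Function.comp_apply, map_mul, map_inv₀, map_pow, Complex.conj_ofReal,
        hconjinv ξ hξ, inv_pow, inv_inv]
    rw [heq] at hs2
    exact hs2.tsum_eq.symm
  -- first integral equals zero
  have hcont_dslope : ContinuousOn (dslope g w) (closedBall (0 : ℂ) 1) := by
    have h1 : ContinuousOn (dslope g w) (ball (0 : ℂ) σ⁻¹) :=
      (continuousOn_dslope (isOpen_ball.mem_nhds hwball)).mpr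
        ⟨hgd.continuousOn, hgd.differentiableAt (isOpen_ball.mem_nhds hwball)⟩
    exact h1.mono (closedBall_subset_ball h1σ)
  have Edslope : (∮ ξ in C(0, 1), dslope g w ξ) = 0 := by
    refine circleIntegral_eq_zero_of_differentiable_on_off_countable zero_le_one
      (Set.countable_singleton w) hcont_dslope ?_
    rintro z ⟨hz1, hz2⟩
    refine (differentiableAt_dslope_of_ne ?_).mpr
      (hgd.differentiableAt (isOpen_ball.mem_nhds (ball_subset_ball h1σ.le hz1)))
    simpa using hz2
  -- pointwise identification of first integrand
  have hpt1 : ∀ ξ : ℂ, ‖ξ‖ = 1 → ξ ≠ w →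
      (conj (h w) - conj (h ξ)) / (w - ξ) = dslope g w ξ := by
    intro ξ hξ hne
    rw [dslope_of_ne g hne, slope_def_field, hconj_eq ξ hξ, hconj_eq w hw]
    have h1 : w - ξ ≠ 0 := sub_ne_zero.mpr (Ne.symm hne)
    have h2 : ξ - w ≠ 0 := sub_ne_zero.mpr hne
    field_simp
    ring
  have E1 : (∮ ξ in C(0, 1), (conj (h w) - conj (h ξ)) / (w - ξ)) = 0 := by
    rw [circleIntegral_congr_off_pt hpt1]; exact Edslope
  -- the function F for the second integral
  set U : Set ℂ := {ξ : ℂ | r < ‖ξ‖} with hUdef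
  have hUopen : IsOpen U := isOpen_lt continuous_const continuous_norm
  have hwU : w ∈ U := by rw [hUdef]; simpa [hw] using hr
  set F : ℂ → ℂ := fun ξ => -(dslope h w ξ / (w * ξ)) with hFdef
  have hUne : ∀ ξ ∈ U, w * ξ ≠ 0 := by
    intro ξ hξ
    have : ξ ≠ 0 := by
      intro h0
      rw [hUdef] at hξ; rw [h0] at hξ; simp at hξ; linarith [hξ]
    exact mul_ne_zero hw0 this
  have hdsc : ContinuousOn (dslope h w) U :=
    (continuousOn_dslope (hUopen.mem_nhds hwU)).mpr
      ⟨hdiff.continuousOn, hdiff.differentiableAt (hUopen.mem_nhds hwU)⟩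
  have hFc : ContinuousOn F U :=
    ((hdsc.div ((continuousOn_const.mul continuousOn_id)) hUne)).neg
  have hFd : ∀ z ∈ U, z ≠ w → DifferentiableAt ℂ F z := by
    intro z hz hzw
    exact (((differentiableAt_dslope_of_ne hzw).mpr
      (hdiff.differentiableAt (hUopen.mem_nhds hz))).div
      ((differentiableAt_const w).mul differentiableAt_id) (hUne z hz)).neg
  have hsub1 : ∀ R : ℝ, closedBall (0:ℂ) R \ ball (0:ℂ) 1 ⊆ U := by
    intro R z hz
    rw [hUdef]
    have : (1:ℝ) ≤ ‖z‖ := by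
      have := hz.2
      rw [mem_ball_zero_iff] at this
      linarith [not_lt.mp this]
    exact lt_of_lt_of_le hr this
  have hannulus : ∀ R : ℝ, 1 ≤ R → (∮ ξ in C(0, R), F ξ) = ∮ ξ in C(0, 1), F ξ := by
    intro R hR
    refine circleIntegral_eq_of_differentiable_on_annulus_off_countable zero_lt_one hR
      (Set.countable_singleton w) (hFc.mono (hsub1 R)) ?_
    rintro z ⟨⟨hz1, hz2⟩, hz3⟩
    refine hFd z ?_ (by simpa using hz3)
    rw [hUdef]
    have : (1:ℝ) ≤ ‖z‖ := by
      rw [mem_closedBall_zero_iff, not_le] at hz2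
      exact hz2.le
    exact lt_of_lt_of_le hr this
  -- the second integral vanishes
  have EF : (∮ ξ in C(0, 1), F ξ) = 0 := by
    have hbound : ∀ R : ℝ, 2 ≤ R → ‖∮ ξ in C(0, 1), F ξ‖ ≤ 4 * Real.pi * M / (R - 1) := by
      intro R hR
      have hR1 : (1:ℝ) ≤ R := by linarith
      have hR0 : (0:ℝ) < R := by linarith
      rw [← hannulus R hR1]
      have hptF : ∀ z ∈ sphere (0:ℂ) R, ‖F z‖ ≤ 2 * M / ((R - 1) * R) := by
        intro z hz
        rw [mem_sphere_zero_iff_norm] at hz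
        have habsz : ‖z‖ = R := by exact hz
        have hzw : z ≠ w := by
          intro hzw; rw [hzw, hw] at habsz; linarith
        have hz1 : (1:ℝ) ≤ ‖z‖ := by rw [habsz]; linarith
        have hnum : ‖h z - h w‖ ≤ 2 * M := by
          calc ‖h z - h w‖ ≤ ‖h z‖ + ‖h w‖ := norm_sub_le _ _
            _ ≤ M + M := add_le_add (hhM z hz1) (hhM w (by rw [hw]))
            _ = 2 * M := by ring
        have hden : R - 1 ≤ ‖z - w‖ := by
          have h3 := norm_sub_norm_le z w
          have hwn : ‖w‖ = 1 := by rw [hw]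
          rwa [hz, hwn] at h3
        have hden0 : (0:ℝ) < R - 1 := by linarith
        have hds : ‖dslope h w z‖ ≤ 2 * M / (R - 1) := by
          rw [dslope_of_ne h hzw, slope_def_field, norm_div]
          exact div_le_div₀ (by positivity) hnum (by linarith) hden
        rw [hFdef]
        simp only [norm_neg, norm_div, norm_mul]
        have hwz : ‖w‖ * ‖z‖ = R := by
          rw [hz, hw, one_mul]
        rw [hwz]
        calc ‖dslope h w z‖ / R ≤ (2 * M / (R - 1)) / R := by gcongr
          _ = 2 * M / ((R - 1) * R) := by rw [div_div]
      have := circleIntegral.norm_integral_le_of_norm_le_const (f := F) (c := 0) hR0.le hptF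
      refine this.trans (le_of_eq ?_)
      have hRne : R ≠ 0 := by linarith
      have hR1ne : R - 1 ≠ 0 := by linarith
      field_simp
      ring
    have htend : Tendsto (fun R : ℝ => 4 * Real.pi * M / (R - 1)) atTop (nhds 0) :=
      Tendsto.div_atTop tendsto_const_nhds (tendsto_atTop_add_const_right _ _ tendsto_id)
    have hle : ‖∮ ξ in C(0, 1), F ξ‖ ≤ 0 :=
      ge_of_tendsto htend (eventually_atTop.mpr ⟨2, fun R hR => hbound R hR⟩)
    rw [← norm_eq_zero]
    exact le_antisymm hle (norm_nonneg _)
  -- pointwise identification of second integrand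
  have hpt2 : ∀ ξ : ℂ, ‖ξ‖ = 1 → ξ ≠ w →
      (h w - h ξ) * (conj w - conj ξ) / (w - ξ) ^ 2 = F ξ := by
    intro ξ hξ hne
    have hξ0 : ξ ≠ 0 := by
      intro h0; rw [h0] at hξ; simp at hξ
    have h1 : w - ξ ≠ 0 := sub_ne_zero.mpr (Ne.symm hne)
    have h2 : ξ - w ≠ 0 := sub_ne_zero.mpr hne
    rw [hFdef]
    simp only
    rw [dslope_of_ne h hne, slope_def_field, hconjinv ξ hξ, hconjinv w hw]
    field_simp
    ring
  have E2 : (∮ ξ in C(0, 1), (h w - h ξ) * (conj w - conj ξ) / (w - ξ) ^ 2) = 0 := by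
    rw [circleIntegral_congr_off_pt hpt2]; exact EF
  -- third integral
  have hpt3 : ∀ ξ : ℂ, ‖ξ‖ = 1 → ξ ≠ w →
      (((conj (h w - h ξ) * (w - ξ)).im : ℝ) : ℂ) / (w - ξ) ^ 2 =
        (2 * Complex.I)⁻¹ • (dslope g w ξ - F ξ) := by
    intro ξ hξ hne
    rw [smul_eq_mul, ← hpt1 ξ hξ hne, ← hpt2 ξ hξ hne]
    have h1 : w - ξ ≠ 0 := sub_ne_zero.mpr (Ne.symm hne)
    have him : ∀ z : ℂ, (z.im : ℂ) = (z - conj z) / (2 * Complex.I) := by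
      intro z
      rw [eq_div_iff (by simp [Complex.I_ne_zero] : (2 * Complex.I : ℂ) ≠ 0)]
      have := Complex.sub_conj z
      rw [this]
      push_cast
      ring
    rw [him]
    have hconjz : conj (conj (h w - h ξ) * (w - ξ)) = (h w - h ξ) * (conj w - conj ξ) := by
      rw [map_mul, Complex.conj_conj, map_sub]
    rw [hconjz, map_sub]
    have h2I : (2 : ℂ) * Complex.I ≠ 0 := by simp [Complex.I_ne_zero]
    field_simp
  have hFint : CircleIntegrable F 0 1 := by
    refine (hFc.mono ?_).circleIntegrable zero_le_one
    intro z hz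
    rw [mem_sphere_zero_iff_norm] at hz
    rw [hUdef]
    simp only [Set.mem_setOf_eq, hz]
    exact hr
  have hdint : CircleIntegrable (dslope g w) 0 1 :=
    (hcont_dslope.mono sphere_subset_closedBall).circleIntegrable zero_le_one
  have E3 : (∮ ξ in C(0, 1), (((conj (h w - h ξ) * (w - ξ)).im : ℝ) : ℂ) / (w - ξ) ^ 2) = 0 := by
    rw [circleIntegral_congr_off_pt hpt3]
    rw [circleIntegral.integral_smul (2 * Complex.I)⁻¹ (fun ξ => dslope g w ξ - F ξ) 0 1,
      circleIntegral.integral_sub hdint hFint, Edslope, EF]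
    simp
  refine ⟨?_, ?_⟩
  · rw [E1, E2, E3]; ring
  · rw [E1, E2]; ring
end
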